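/- In the CDGA of Theorem 2 with general perturbation dm = Σ_{i=1}^{2k-1} xᵢnᵢ + p, p ∈ Λ²⟨x₁,…,x_{2k+1}⟩ with coefficient t := t_{2k,2k+1} of x_{2k}x_{2k+1}: if t ≠ 0 then the CDGA is isomorphic to the model with dm = Σᵢ xᵢnᵢ + x_{2k}x_{2k+1}, via first the shift f(nⱼ) = nⱼ - Σ_{i>j} t_{j,i}xᵢ and then the rescaling x_{2k+1} ↦ (1/t)x_{2k+1}. -/
import Mathlib


noncomputable section

/-- Index type for the degree-1 generators `x₁,…,x_{2k+1}, n₁,…,n_{2k-1}, m`. -/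
abbrev Jk (k : ℕ) := Fin (2 * k + 1) ⊕ Fin (2 * k - 1) ⊕ Unit

/-- The free graded-commutative algebra on these degree-1 generators, modelled as the
exterior algebra of `ℝ^{Jk k}`. -/
abbrev Lk (k : ℕ) := ExteriorAlgebra ℝ (Jk k → ℝ)

def X (k : ℕ) (i : Fin (2 * k + 1)) : Lk k :=
  ExteriorAlgebra.ι ℝ (Pi.single (Sum.inl i) 1)

def N (k : ℕ) (j : Fin (2 * k - 1)) : Lk k :=
  ExteriorAlgebra.ι ℝ (Pi.single (Sum.inr (Sum.inl j)) 1)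

def M (k : ℕ) : Lk k := ExteriorAlgebra.ι ℝ (Pi.single (Sum.inr (Sum.inr ())) 1)

def f1 (k : ℕ) (j : Fin (2 * k - 1)) : Fin (2 * k + 1) := ⟨j.1, by have := j.2; omega⟩

def f2 (k : ℕ) (j : Fin (2 * k - 1)) : Fin (2 * k + 1) :=
  ⟨j.1 + 1, by have := j.2; omega⟩

/-- `x_{2k}` (0-based index `2k-1`). -/
def x2k (k : ℕ) : Fin (2 * k + 1) := ⟨2 * k - 1, by omega⟩

/-- `x_{2k+1}` (0-based index `2k`). -/
def x2k1 (k : ℕ) : Fin (2 * k + 1) := ⟨2 * k, by omega⟩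


section AuxLemmas

variable {R M : Type*} [CommRing R] [AddCommGroup M] [Module R M]

lemma gradedLeibniz (d : ExteriorAlgebra R M →ₗ[R] ExteriorAlgebra R M)
    (hone : d 1 = 0)
    (hleib : ∀ (v : M) (y : ExteriorAlgebra R M),
      d (ExteriorAlgebra.ι R v * y)
        = d (ExteriorAlgebra.ι R v) * y - ExteriorAlgebra.ι R v * d y) :
    ∀ a b : ExteriorAlgebra R M,
      d (a * b) = d a * b + CliffordAlgebra.involute a * d b := by
  have hscal : ∀ r : R, d (algebraMap R (ExteriorAlgebra R M) r) = 0 := by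
    intro r
    rw [Algebra.algebraMap_eq_smul_one, map_smul, hone, smul_zero]
  intro a
  induction a using ExteriorAlgebra.induction with
  | algebraMap r =>
      intro b
      rw [hscal, zero_mul, zero_add, AlgHom.commutes,
        Algebra.algebraMap_eq_smul_one, smul_one_mul, smul_one_mul, map_smul]
  | ι v =>
      intro b
      rw [hleib, CliffordAlgebra.involute_ι, sub_eq_add_neg, neg_mul]
  | mul x y hx hy =>
      intro b
      rw [mul_assoc, hx, hy, hx y]
      simp only [map_mul]
      noncomm_ring
  | add x y hx hy =>
      intro b
      rw [add_mul, map_add, map_add, map_add, hx, hy]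
      noncomm_ring

lemma hom_involute_comm (F : ExteriorAlgebra R M →ₐ[R] ExteriorAlgebra R M)
    (h : ∀ v : M, ∃ w, F (ExteriorAlgebra.ι R v) = ExteriorAlgebra.ι R w) :
    ∀ a, F (CliffordAlgebra.involute a) = CliffordAlgebra.involute (F a) := by
  intro a
  induction a using ExteriorAlgebra.induction with
  | algebraMap r => rw [AlgHom.commutes, AlgHom.commutes, AlgHom.commutes]
  | ι v =>
      obtain ⟨w, hw⟩ := h v
      rw [CliffordAlgebra.involute_ι, map_neg, hw, CliffordAlgebra.involute_ι]
  | mul x y hx hy => rw [map_mul, map_mul, hx, hy, map_mul, map_mul]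
  | add x y hx hy => rw [map_add, map_add, hx, hy, map_add, map_add]
end AuxLemmas

variable (k : ℕ) (t : Fin (2 * k + 1) → Fin (2 * k + 1) → ℝ)

def sv (a : Fin (2 * k + 1)) : ℝ := if a = x2k1 k then (t (x2k k) (x2k1 k))⁻¹ else 1
def rv (a : Fin (2 * k + 1)) : ℝ := if a = x2k1 k then t (x2k k) (x2k1 k) else 1
def cv (j : Fin (2 * k - 1)) (a : Fin (2 * k + 1)) : ℝ :=
  if (f1 k j).1 < a.1 then t (f1 k j) a * sv k t a else 0

def phiL : (Jk k → ℝ) →ₗ[ℝ] (Jk k → ℝ) where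
  toFun v w := match w with
    | .inl a => sv k t a * v (.inl a) - ∑ j, cv k t j a * v (.inr (.inl j))
    | .inr w' => v (.inr w')
  map_add' u v := by
    funext w
    rcases w with a | w' <;>
      simp [mul_add, Finset.sum_add_distrib] <;> ring
  map_smul' r v := by
    funext w
    rcases w with a | w'
    · simp only [Pi.smul_apply, smul_eq_mul, RingHom.id_apply]
      rw [mul_sub, Finset.mul_sum]
      congr 1
      · ring
      · exact Finset.sum_congr rfl fun j _ => by ring
    · rfl

def psiL : (Jk k → ℝ) →ₗ[ℝ] (Jk k → ℝ) where
  toFun v w := match w with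
    | .inl a => rv k t a * v (.inl a) + rv k t a * ∑ j, cv k t j a * v (.inr (.inl j))
    | .inr w' => v (.inr w')
  map_add' u v := by
    funext w
    rcases w with a | w' <;>
      simp [mul_add, Finset.sum_add_distrib] <;> ring
  map_smul' r v := by
    funext w
    rcases w with a | w'
    · simp only [Pi.smul_apply, smul_eq_mul, RingHom.id_apply]
      rw [mul_add]
      simp only [Finset.mul_sum]
      congr 1
      · ring
      · exact Finset.sum_congr rfl fun j _ => by ring
    · rfl

def Fh : Lk k →ₐ[ℝ] Lk k :=
  ExteriorAlgebra.lift ℝ ⟨(ExteriorAlgebra.ι ℝ).comp (phiL k t),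
    fun m => by simp [ExteriorAlgebra.ι_sq_zero]⟩

def Gh : Lk k →ₐ[ℝ] Lk k :=
  ExteriorAlgebra.lift ℝ ⟨(ExteriorAlgebra.ι ℝ).comp (psiL k t),
    fun m => by simp [ExteriorAlgebra.ι_sq_zero]⟩

lemma Fh_ι (v : Jk k → ℝ) :
    Fh k t (ExteriorAlgebra.ι ℝ v) = ExteriorAlgebra.ι ℝ (phiL k t v) :=
  ExteriorAlgebra.lift_ι_apply ℝ _ _ v

lemma Gh_ι (v : Jk k → ℝ) :
    Gh k t (ExteriorAlgebra.ι ℝ v) = ExteriorAlgebra.ι ℝ (psiL k t v) :=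
  ExteriorAlgebra.lift_ι_apply ℝ _ _ v

lemma phi_psi (ht : t (x2k k) (x2k1 k) ≠ 0) (v : Jk k → ℝ) :
    phiL k t (psiL k t v) = v := by
  have hsr : ∀ a, sv k t a * rv k t a = 1 := by
    intro a
    unfold sv rv
    split
    · exact inv_mul_cancel₀ ht
    · exact one_mul 1
  funext w
  rcases w with a | w'
  · show sv k t a * (rv k t a * v (.inl a) + rv k t a * ∑ j, cv k t j a * v (.inr (.inl j)))
      - ∑ j, cv k t j a * v (.inr (.inl j)) = v (.inl a)
    linear_combination (v (Sum.inl a) + ∑ j, cv k t j a * v (Sum.inr (Sum.inl j))) * hsr a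
  · rfl

lemma psi_phi (ht : t (x2k k) (x2k1 k) ≠ 0) (v : Jk k → ℝ) :
    psiL k t (phiL k t v) = v := by
  have hrs : ∀ a, rv k t a * sv k t a = 1 := by
    intro a
    unfold sv rv
    split
    · exact mul_inv_cancel₀ ht
    · exact one_mul 1
  funext w
  rcases w with a | w'
  · show rv k t a * (sv k t a * v (.inl a) - ∑ j, cv k t j a * v (.inr (.inl j)))
      + rv k t a * ∑ j, cv k t j a * v (.inr (.inl j)) = v (.inl a)
    linear_combination (v (Sum.inl a)) * hrs a
  · rfl

def Feq (ht : t (x2k k) (x2k1 k) ≠ 0) : Lk k ≃ₐ[ℝ] Lk k :=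
  AlgEquiv.ofAlgHom (Fh k t) (Gh k t)
    (by
      apply ExteriorAlgebra.hom_ext
      apply LinearMap.ext
      intro v
      simp [Fh_ι, Gh_ι, phi_psi k t ht])
    (by
      apply ExteriorAlgebra.hom_ext
      apply LinearMap.ext
      intro v
      simp [Fh_ι, Gh_ι, psi_phi k t ht])

lemma phi_X (i : Fin (2 * k + 1)) :
    phiL k t (Pi.single (Sum.inl i) 1) = sv k t i • (Pi.single (Sum.inl i) 1 : Jk k → ℝ) := by
  funext w
  rcases w with a | w' <;>
    simp only [phiL, LinearMap.coe_mk, AddHom.coe_mk, Pi.smul_apply, smul_eq_mul]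
  · by_cases h : a = i <;> simp [Pi.single_apply, h]
  · simp [Pi.single_apply]

lemma phi_N (j : Fin (2 * k - 1)) :
    phiL k t (Pi.single (Sum.inr (Sum.inl j)) 1)
      = (Pi.single (Sum.inr (Sum.inl j)) 1 : Jk k → ℝ)
          - ∑ i, cv k t j i • (Pi.single (Sum.inl i) 1 : Jk k → ℝ) := by
  funext w
  rcases w with a | (j' | u) <;>
    simp only [phiL, LinearMap.coe_mk, AddHom.coe_mk, Pi.sub_apply, Finset.sum_apply,
      Pi.smul_apply, smul_eq_mul]
  · simp [Pi.single_apply, mul_ite, Finset.sum_ite_eq, Finset.sum_ite_eq']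
  · simp [Pi.single_apply]
  · simp [Pi.single_apply]

lemma phi_M : phiL k t (Pi.single (Sum.inr (Sum.inr ())) 1)
      = (Pi.single (Sum.inr (Sum.inr ())) 1 : Jk k → ℝ) := by
  funext w
  rcases w with a | (j' | u) <;>
    simp only [phiL, LinearMap.coe_mk, AddHom.coe_mk]
  all_goals simp [Pi.single_apply]

def Hterm (a : Fin (2 * k + 1)) : Lk k :=
  ∑ b, (if a.1 < b.1 then t a b * sv k t b else 0) • (X k a * X k b)

lemma sv_eq_one (a : Fin (2 * k + 1)) (ha : a.1 < 2 * k) : sv k t a = 1 := by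
  unfold sv
  rw [if_neg]
  intro h
  subst h
  simp [x2k1] at ha

lemma Hx2k1 : Hterm k t (x2k1 k) = 0 := by
  refine Finset.sum_eq_zero fun b _ => ?_
  rw [if_neg, zero_smul]
  have := b.2
  simp only [x2k1]
  omega

lemma Hx2k (hk : 2 ≤ k) (ht : t (x2k k) (x2k1 k) ≠ 0) :
    Hterm k t (x2k k) = X k (x2k k) * X k (x2k1 k) := by
  rw [Hterm, Finset.sum_eq_single (x2k1 k)]
  · rw [if_pos, sv, if_pos rfl, mul_inv_cancel₀ ht, one_smul]
    show 2 * k - 1 < 2 * k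
    omega
  · intro b _ hb
    rw [if_neg, zero_smul]
    have h2 := b.2
    have h3 : b.1 ≠ 2 * k := fun h => hb (Fin.ext h)
    simp only [x2k]
    omega
  · intro h
    exact absurd (Finset.mem_univ _) h

lemma Hsum (hk : 2 ≤ k) (ht : t (x2k k) (x2k1 k) ≠ 0) :
    ∑ a, Hterm k t a = (∑ j, Hterm k t (f1 k j)) + X k (x2k k) * X k (x2k1 k) := by
  rw [← Finset.sum_filter_add_sum_filter_not Finset.univ
    (fun a : Fin (2 * k + 1) => a.1 < 2 * k - 1)]
  congr 1
  · refine Finset.sum_bij' (fun a ha => (⟨a.1, (Finset.mem_filter.mp ha).2⟩ : Fin (2 * k - 1)))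
      (fun j _ => f1 k j) (fun a ha => Finset.mem_univ _)
      (fun j hj => Finset.mem_filter.mpr ⟨Finset.mem_univ _, j.2⟩)
      (fun a ha => rfl) (fun j hj => rfl) (fun a ha => rfl)
  · have hset : Finset.univ.filter (fun a : Fin (2 * k + 1) => ¬ a.1 < 2 * k - 1)
        = {x2k k, x2k1 k} := by
      ext a
      have h2 := a.2
      simp only [Finset.mem_filter, Finset.mem_univ, true_and, Finset.mem_insert,
        Finset.mem_singleton, Fin.ext_iff, x2k, x2k1]
      omega
    have hne : (x2k k) ∉ ({x2k1 k} : Finset (Fin (2 * k + 1))) := by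
      simp only [Finset.mem_singleton, Fin.ext_iff, x2k, x2k1]
      omega
    rw [hset, Finset.sum_insert hne, Finset.sum_singleton, Hx2k k t hk ht, Hx2k1, add_zero]


set_option maxHeartbeats 1000000

/-- let `d` be the differential with `dxᵢ = 0`, `dnᵢ = xᵢx_{i+1}` and
`dm = Σᵢ xᵢnᵢ + p` with `p = Σ_{j<i} t_{j,i} xⱼxᵢ`, and suppose the coefficient
`t := t_{2k,2k+1}` of `x_{2k}x_{2k+1}` is nonzero.  Then the CDGA is isomorphic to the
model of Theorem B(2) (differential `d'` with `d'm = Σᵢ xᵢnᵢ + x_{2k}x_{2k+1}`), via a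
shift of the `nⱼ` by linear combinations of the `x`'s followed by the rescaling
`x_{2k+1} ↦ (1/t)·x_{2k+1}`. -/
theorem stmt13 (k : ℕ) (hk : 2 ≤ k) (t : Fin (2 * k + 1) → Fin (2 * k + 1) → ℝ)
    (ht : t (x2k k) (x2k1 k) ≠ 0)
    (d d' : Lk k →ₗ[ℝ] Lk k)
    (hleib : ∀ (v : Jk k → ℝ) (y : Lk k),
      d (ExteriorAlgebra.ι ℝ v * y)
        = d (ExteriorAlgebra.ι ℝ v) * y - ExteriorAlgebra.ι ℝ v * d y)
    (hleib' : ∀ (v : Jk k → ℝ) (y : Lk k),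
      d' (ExteriorAlgebra.ι ℝ v * y)
        = d' (ExteriorAlgebra.ι ℝ v) * y - ExteriorAlgebra.ι ℝ v * d' y)
    (hone : d 1 = 0) (hone' : d' 1 = 0)
    (hx : ∀ i, d (X k i) = 0) (hx' : ∀ i, d' (X k i) = 0)
    (hn : ∀ j, d (N k j) = X k (f1 k j) * X k (f2 k j))
    (hn' : ∀ j, d' (N k j) = X k (f1 k j) * X k (f2 k j))
    (hm : d (M k) = (∑ j : Fin (2 * k - 1), X k (f1 k j) * N k j)
        + ∑ a : Fin (2 * k + 1), ∑ b : Fin (2 * k + 1),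
            (if a.1 < b.1 then t a b else 0) • (X k a * X k b))
    (hm' : d' (M k) = (∑ j : Fin (2 * k - 1), X k (f1 k j) * N k j)
        + X k (x2k k) * X k (x2k1 k)) :
    ∃ f : Lk k ≃ₐ[ℝ] Lk k,
      (∀ i : Fin (2 * k + 1), i.1 < 2 * k → f (X k i) = X k i) ∧
      f (X k (x2k1 k)) = (t (x2k k) (x2k1 k))⁻¹ • X k (x2k1 k) ∧
      f (M k) = M k ∧
      (∀ j : Fin (2 * k - 1), ∃ c : Fin (2 * k + 1) → ℝ,
        f (N k j) = N k j - ∑ i : Fin (2 * k + 1), c i • X k i) ∧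
      ∀ y : Lk k, f (d y) = d' (f y) := by
  have hcoe : ∀ x, (Feq k t ht) x = Fh k t x := fun _ => rfl
  have hFX : ∀ i, Fh k t (X k i) = sv k t i • X k i := by
    intro i
    rw [X, Fh_ι, phi_X, map_smul]
  have hFN : ∀ j, Fh k t (N k j) = N k j - ∑ i, cv k t j i • X k i := by
    intro j
    rw [N, Fh_ι, phi_N, map_sub, map_sum]
    simp only [map_smul]
    rfl
  have hFM : Fh k t (M k) = M k := by rw [M, Fh_ι, phi_M]
  have hsf1 : ∀ j, sv k t (f1 k j) = 1 := fun j =>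
    sv_eq_one k t _ (by have := j.2; simp only [f1]; omega)
  have hsf2 : ∀ j, sv k t (f2 k j) = 1 := fun j =>
    sv_eq_one k t _ (by have := j.2; simp only [f2]; omega)
  have hinv : ∀ a, Fh k t (CliffordAlgebra.involute a)
      = CliffordAlgebra.involute (Fh k t a) :=
    hom_involute_comm (Fh k t) (fun v => ⟨phiL k t v, Fh_ι k t v⟩)
  -- the three generator compatibility facts
  have hgX : ∀ i, Fh k t (d (X k i)) = d' (Fh k t (X k i)) := by
    intro i
    rw [hx, map_zero, hFX, map_smul, hx', smul_zero]
  have hgN : ∀ j, Fh k t (d (N k j)) = d' (Fh k t (N k j)) := by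
    intro j
    rw [hn, map_mul, hFX, hFX, hsf1, hsf2, one_smul, one_smul, hFN, map_sub, hn', map_sum]
    simp only [map_smul, hx', smul_zero, Finset.sum_const_zero, sub_zero]
  have hgM : Fh k t (d (M k)) = d' (Fh k t (M k)) := by
    have c1 : Fh k t (∑ j, X k (f1 k j) * N k j)
        = (∑ j, X k (f1 k j) * N k j) - ∑ j, Hterm k t (f1 k j) := by
      rw [map_sum, ← Finset.sum_sub_distrib]
      refine Finset.sum_congr rfl fun j _ => ?_
      rw [map_mul, hFX, hsf1 j, one_smul, hFN, mul_sub, Finset.mul_sum, Hterm]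
      congr 1
      refine Finset.sum_congr rfl fun b _ => ?_
      rw [mul_smul_comm]
      rfl
    have c2 : Fh k t (∑ a, ∑ b, (if a.1 < b.1 then t a b else 0) • (X k a * X k b))
        = ∑ a, Hterm k t a := by
      rw [map_sum]
      refine Finset.sum_congr rfl fun a _ => ?_
      rw [map_sum, Hterm]
      refine Finset.sum_congr rfl fun b _ => ?_
      rw [map_smul, map_mul, hFX, hFX, smul_mul_assoc, mul_smul_comm, smul_smul, smul_smul]
      congr 1
      by_cases h : a.1 < b.1
      · rw [if_pos h, if_pos h, sv_eq_one k t a (by have := b.2; omega)]; ring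
      · rw [if_neg h, if_neg h]; ring
    rw [hFM, hm, hm', map_add, c1, c2, Hsum k t hk ht]
    abel
  have hgen : ∀ w : Jk k, Fh k t (d (ExteriorAlgebra.ι ℝ (Pi.single w 1)))
      = d' (Fh k t (ExteriorAlgebra.ι ℝ (Pi.single w 1))) := by
    intro w
    rcases w with i | (j | u)
    · exact hgX i
    · exact hgN j
    · exact hgM
  refine ⟨Feq k t ht, ?_, ?_, ?_, ?_, ?_⟩
  · intro i hi
    rw [hcoe, hFX, sv_eq_one k t i hi, one_smul]
  · rw [hcoe, hFX, sv, if_pos rfl]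
  · rw [hcoe, hFM]
  · intro j
    exact ⟨cv k t j, by rw [hcoe, hFN]⟩
  · intro y
    induction y using ExteriorAlgebra.induction with
    | algebraMap r =>
        have h0 : d (algebraMap ℝ (Lk k) r) = 0 := by
          rw [Algebra.algebraMap_eq_smul_one, map_smul, hone, smul_zero]
        have h0' : d' (algebraMap ℝ (Lk k) r) = 0 := by
          rw [Algebra.algebraMap_eq_smul_one, map_smul, hone', smul_zero]
        rw [h0, map_zero, AlgEquiv.commutes, h0']
    | ι v =>
        have hv : ExteriorAlgebra.ι ℝ v
            = ∑ w : Jk k, v w • ExteriorAlgebra.ι ℝ (Pi.single w 1) := by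
          calc ExteriorAlgebra.ι ℝ v
              = ExteriorAlgebra.ι ℝ (∑ w : Jk k, Pi.single w (v w)) := by
                rw [Finset.univ_sum_single]
            _ = ∑ w : Jk k, ExteriorAlgebra.ι ℝ (Pi.single w (v w)) := map_sum _ _ _
            _ = ∑ w : Jk k, v w • ExteriorAlgebra.ι ℝ (Pi.single w 1) := by
                refine Finset.sum_congr rfl fun w _ => ?_
                rw [← map_smul, ← Pi.single_smul, smul_eq_mul, mul_one]
        rw [hcoe, hcoe, hv]
        simp only [map_sum, map_smul]
        exact Finset.sum_congr rfl fun w _ => by rw [hgen w]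
    | mul x y hx1 hy1 =>
        simp only [hcoe] at hx1 hy1 ⊢
        rw [gradedLeibniz d hone hleib, map_add, map_mul, map_mul, hx1, hy1, hinv,
          map_mul, gradedLeibniz d' hone' hleib']
    | add x y hx1 hy1 =>
        rw [map_add, map_add, map_add, hx1, hy1, map_add]
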